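/- Let I be a facet of the input simplicial model and γ_1, γ_2, …, γ_r ordered partitions of Π with γ_1 = (C_1, …, C_l). Then for every r ≥ 1 and every agent a ∈ Π: {(p, i_p) ∈ I : p ∈ C_1} ⊆ car(view^r_a(I, γ_1, …, γ_r)) ⊆ I. -/

import Mathlib

/-- An ordered partition of the set of agents: a sequence
`∅ ≠ C₁ ⊊ C₂ ⊊ ⋯ ⊊ C_l = Π`. -/
structure OrderedPartition (Agent : Type) [Fintype Agent] [DecidableEq Agent] where
  parts : List (Finset Agent)
  ne : parts ≠ []
  head_nonempty : (parts.head ne).Nonempty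
  chain : parts.Chain' (· ⊂ ·)
  last_univ : parts.getLast ne = Finset.univ

namespace OrderedPartition

variable {Agent : Type} [Fintype Agent] [DecidableEq Agent]

/-- `C_{min {j : a ∈ C_j}}`: the first component of the ordered partition
containing the agent `a` (it exists since the last component is `Π`). -/
def myPart (γ : OrderedPartition Agent) (a : Agent) : Finset Agent :=
  (γ.parts.find? (fun C => decide (a ∈ C))).getD Finset.univ

end OrderedPartition

/-- `Views r`: the possible views after communicating `r` times.
`Views 0 = V^in` and `Views (r+1)` consists of sets of pairs of an agent and a
view in `Views r`. -/
def Views (Agent Value : Type) : ℕ → Type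
  | 0 => Value
  | r + 1 => Set (Agent × Views Agent Value r)

/-- `view^r_a(I, γ₁, …, γ_r)`: the view of agent `a` after `r` rounds of
immediate snapshot from the input facet `I` (given by `i : Agent → Value`),
scheduled by the ordered partitions `γ₁, …, γ_r`. -/
def view {Agent Value : Type} [Fintype Agent] [DecidableEq Agent] (i : Agent → Value) :
    (r : ℕ) → (Fin r → OrderedPartition Agent) → Agent → Views Agent Value r
  | 0, _, a => i a
  | r + 1, γ, a =>
      {x | ∃ p ∈ (γ (Fin.last r)).myPart a,
        x = (p, view i r (fun j => γ j.castSucc) p)}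

/-- The flattening map `car : Views^{r+1} → Views^1`:
`car(w) = w` for `w ∈ Views^1`, and `car(w) = ⋃_{(p,v) ∈ w} car(v)` otherwise. -/
def car {Agent Value : Type} : (r : ℕ) → Views Agent Value (r + 1) → Set (Agent × Value)
  | 0, w => w
  | r + 1, w => {q | ∃ x ∈ (show Set (Agent × Views Agent Value (r + 1)) from w),
      q ∈ car r x.2}

/-- For a facet `I` of the input simplicial model (given by the input assignment
`i : Agent → Value`), ordered partitions `γ₁, …, γ_r` with `γ₁ = (C₁, …, C_l)`,
every `r ≥ 1` (written `r = s + 1`) and every agent `a`: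
`{(p, i_p) ∈ I : p ∈ C₁} ⊆ car(view^r_a(I, γ₁, …, γ_r)) ⊆ I`. -/

lemma myPart_spec {Agent : Type} [Fintype Agent] [DecidableEq Agent]
    (γ : OrderedPartition Agent) (a : Agent) :
    γ.myPart a ∈ γ.parts ∧ a ∈ γ.myPart a := by
  have hsome : (γ.parts.find? (fun C => decide (a ∈ C))).isSome := by
    rw [List.find?_isSome]
    exact ⟨γ.parts.getLast γ.ne, List.getLast_mem γ.ne, by simp [γ.last_univ]⟩
  obtain ⟨C, hC⟩ := Option.isSome_iff_exists.mp hsome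
  have hmem := List.mem_of_find?_eq_some hC
  have ha := List.find?_some hC
  simp only [decide_eq_true_eq] at ha
  constructor <;> simp [OrderedPartition.myPart, hC, hmem, ha]

lemma head_subset {Agent : Type} [Fintype Agent] [DecidableEq Agent]
    (γ : OrderedPartition Agent) {C : Finset Agent} (hC : C ∈ γ.parts) :
    γ.parts.head γ.ne ⊆ C := by
  have hpw : γ.parts.Pairwise (· ⊂ ·) :=
    List.isChain_iff_pairwise.mp γ.chain
  have hcons : γ.parts.head γ.ne :: γ.parts.tail = γ.parts := List.cons_head_tail γ.ne
  rw [← hcons] at hpw hC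
  rcases List.mem_cons.mp hC with h | h
  · exact h ▸ subset_rfl
  · exact ((List.pairwise_cons.mp hpw).1 C h).subset

lemma head_subset_myPart {Agent : Type} [Fintype Agent] [DecidableEq Agent]
    (γ : OrderedPartition Agent) (a : Agent) :
    γ.parts.head γ.ne ⊆ γ.myPart a :=
  head_subset γ (myPart_spec γ a).1

theorem car_view_subset
    {Agent Value : Type} [Fintype Agent] [DecidableEq Agent] [Nonempty Agent]
    (i : Agent → Value) (s : ℕ) (γ : Fin (s + 1) → OrderedPartition Agent) (a : Agent) :
    {x : Agent × Value | ∃ p ∈ (γ 0).parts.head (γ 0).ne, x = (p, i p)} ⊆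
      car s (view i (s + 1) γ a) ∧
    car s (view i (s + 1) γ a) ⊆ {x : Agent × Value | ∃ p : Agent, x = (p, i p)} := by
  induction s generalizing a with
  | zero =>
    have h0 : Fin.last 0 = (0 : Fin 1) := rfl
    constructor
    · rintro x ⟨p, hp, rfl⟩
      exact ⟨p, head_subset_myPart (γ 0) a (by rwa [← h0] at hp ⊢) , rfl⟩
    · rintro x ⟨p, hp, rfl⟩
      exact ⟨p, rfl⟩
  | succ s ih =>
    set γ' : Fin (s + 1) → OrderedPartition Agent := fun j => γ j.castSucc with hγ'
    have h0 : γ' 0 = γ 0 := by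
      simp [hγ', Fin.castSucc_zero]
    constructor
    · rintro x hx
      have hq := (myPart_spec (γ (Fin.last (s+1))) a).2
      refine ⟨(a, view i (s+1) γ' a), ⟨a, hq, rfl⟩, ?_⟩
      exact (ih γ' a).1 (by rw [h0]; exact hx)
    · rintro x ⟨x', ⟨p', hp', rfl⟩, hx⟩
      exact (ih γ' p').2 hx
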